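/- There is a constant C' ≥ 1, depending only on n, the doubling constant C_d, and the constant C in the comparability hypothesis between d and μ, such that for every x ∈ ℝⁿ and every r > 0 there exists a positive real number λ (depending on x and r) with B(x, λ r) ⊆ B^d(x, r) ⊆ B(x, C' λ r). -/

import Mathlib

open MeasureTheory Metric Filter
open scoped Topology ENNReal

set_option maxHeartbeats 1000000 in
/-- Comparison of metric balls with Euclidean balls (Lemma 6.6, first part): there is
`C' ≥ 1` depending only on `n`, `C_d` and `C` such that for every `x` and `r > 0` there
is `λ > 0` with `B(x, λ r) ⊆ B^d(x, r) ⊆ B(x, C' λ r)`. -/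
theorem metric_ball_between_euclidean_balls
    (n : ℕ) (hn : 2 ≤ n)
    (ω : EuclideanSpace ℝ (Fin n) → ℝ) (hω : ∀ x, 0 < ω x)
    (hωloc : LocallyIntegrable ω volume)
    (μ : Measure (EuclideanSpace ℝ (Fin n)))
    (hμ : μ = volume.withDensity fun x => ENNReal.ofReal (ω x))
    (Cd : ℝ) (hCd : 1 ≤ Cd)
    (hdoub : ∀ (x : EuclideanSpace ℝ (Fin n)) (r : ℝ), 0 < r →
      μ (ball x (2 * r)) ≤ ENNReal.ofReal Cd * μ (ball x r))
    (hpos : ∀ (x : EuclideanSpace ℝ (Fin n)) (r : ℝ), 0 < r → 0 < μ (ball x r))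
    (hfin : ∀ (x : EuclideanSpace ℝ (Fin n)) (r : ℝ), 0 < r → μ (ball x r) < ⊤)
    (d : EuclideanSpace ℝ (Fin n) → EuclideanSpace ℝ (Fin n) → ℝ)
    (hd_self : ∀ x, d x x = 0)
    (hd_pos : ∀ x y, x ≠ y → 0 < d x y)
    (hd_symm : ∀ x y, d x y = d y x)
    (hd_tri : ∀ x y z, d x z ≤ d x y + d y z)
    (hd_top : ∀ (x : EuclideanSpace ℝ (Fin n)), ∀ ε : ℝ, 0 < ε →
      (∃ δ > 0, ∀ y, dist x y < δ → d x y < ε) ∧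
      (∃ δ > 0, ∀ y, d x y < δ → dist x y < ε))
    (C : ℝ) (hC : 1 ≤ C)
    (hcomp : ∀ x y : EuclideanSpace ℝ (Fin n),
      C⁻¹ * (μ (ball x (dist x y))).toReal ≤ d x y ^ n ∧
      d x y ^ n ≤ C * (μ (ball x (dist x y))).toReal) :
    ∃ C' : ℝ, 1 ≤ C' ∧ ∀ (x : EuclideanSpace ℝ (Fin n)) (r : ℝ), 0 < r →
      ∃ lam : ℝ, 0 < lam ∧
        ball x (lam * r) ⊆ {y | d x y < r} ∧
        {y | d x y < r} ⊆ ball x (C' * lam * r) := by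
  have hC0 : (0:ℝ) < C := lt_of_lt_of_le one_pos hC
  have hCd0 : (0:ℝ) < Cd := lt_of_lt_of_le one_pos hCd
  set G : EuclideanSpace ℝ (Fin n) → ℝ → ℝ := fun x t => (μ (ball x t)).toReal with hGdef
  have Gpos : ∀ x t, 0 < t → 0 < G x t := fun x t ht =>
    ENNReal.toReal_pos (hpos x t ht).ne' (hfin x t ht).ne
  have Gmono : ∀ x a b, 0 < b → a ≤ b → G x a ≤ G x b := fun x a b hb hab =>
    ENNReal.toReal_mono (hfin x b hb).ne (measure_mono (ball_subset_ball hab))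
  have Gmono2 : ∀ x z a b, 0 < b → ball x a ⊆ ball z b → G x a ≤ G z b := fun x z a b hb hs =>
    ENNReal.toReal_mono (hfin z b hb).ne (measure_mono hs)
  have Gdoub : ∀ x t, 0 < t → G x (2*t) ≤ Cd * G x t := by
    intro x t ht
    have h := hdoub x t ht
    have hne : ENNReal.ofReal Cd * μ (ball x t) ≠ ⊤ :=
      ENNReal.mul_ne_top ENNReal.ofReal_ne_top (hfin x t ht).ne
    calc G x (2*t) ≤ (ENNReal.ofReal Cd * μ (ball x t)).toReal := ENNReal.toReal_mono hne h
      _ = Cd * G x t := by rw [ENNReal.toReal_mul, ENNReal.toReal_ofReal hCd0.le]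
  set ε : ℝ := (Cd^2)⁻¹ with hεdef
  have hε : 0 < ε := by positivity
  -- reverse doubling
  have RD : ∀ x t, 0 < t → (1+ε) * G x t ≤ G x (4*t) := by
    intro x t ht
    have h4t : 0 < 4*t := by linarith
    set e : EuclideanSpace ℝ (Fin n) := EuclideanSpace.single (⟨0, by omega⟩ : Fin n) (1:ℝ)
      with hedef
    set z : EuclideanSpace ℝ (Fin n) := x + (2*t) • e with hzdef
    have hdist : dist x z = 2*t := by
      rw [dist_eq_norm, hzdef, sub_add_cancel_left, norm_neg, norm_smul, hedef,
        EuclideanSpace.norm_single, norm_one, mul_one, Real.norm_eq_abs,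
        abs_of_pos (by linarith)]
    have hdisj : Disjoint (ball x t) (ball z t) :=
      ball_disjoint_ball (by rw [hdist]; linarith)
    have hzx : ball z t ⊆ ball x (4*t) :=
      ball_subset_ball' (by rw [dist_comm, hdist]; linarith)
    have hxz : ball x t ⊆ ball z (4*t) :=
      ball_subset_ball' (by rw [hdist]; linarith)
    have key1 : G x t ≤ Cd^2 * G z t := by
      have h1 : G x t ≤ G z (4*t) := Gmono2 x z t (4*t) h4t hxz
      have h2 : G z (4*t) ≤ Cd * G z (2*t) := by
        have := Gdoub z (2*t) (by linarith)
        have h42 : (4:ℝ)*t = 2*(2*t) := by ring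
        rw [h42]; exact this
      have h3 : G z (2*t) ≤ Cd * G z t := Gdoub z t ht
      calc G x t ≤ Cd * G z (2*t) := h1.trans h2
        _ ≤ Cd * (Cd * G z t) := by nlinarith
        _ = Cd^2 * G z t := by ring
    have key2 : G x t + G z t ≤ G x (4*t) := by
      have hu : μ (ball x t ∪ ball z t) = μ (ball x t) + μ (ball z t) :=
        measure_union hdisj measurableSet_ball
      have hsub : ball x t ∪ ball z t ⊆ ball x (4*t) :=
        Set.union_subset (ball_subset_ball (by linarith)) hzx
      have := ENNReal.toReal_mono (hfin x (4*t) h4t).ne (measure_mono hsub)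
      rw [hu, ENNReal.toReal_add (hfin x t ht).ne (hfin z t ht).ne] at this
      exact this
    have : ε * G x t ≤ G z t := by
      rw [hεdef, inv_mul_le_iff₀ (by positivity)]
      exact key1
    linarith
  have Ggrow : ∀ x t, 0 < t → ∀ k : ℕ, (1+ε)^k * G x t ≤ G x (4^k * t) := by
    intro x t ht k
    induction k with
    | zero => simp
    | succ k ih =>
      have h4k : (0:ℝ) < 4^k * t := by positivity
      have h1 : (1+ε) * G x (4^k * t) ≤ G x (4*(4^k * t)) := RD x (4^k*t) h4k
      have h2 : (4:ℝ)^(k+1) * t = 4*(4^k*t) := by ring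
      calc (1+ε)^(k+1) * G x t = (1+ε) * ((1+ε)^k * G x t) := by ring
        _ ≤ (1+ε) * G x (4^k * t) := by nlinarith
        _ ≤ G x (4^(k+1)*t) := by rw [h2]; exact h1
  -- singletons are null
  have hsing : ∀ x : EuclideanSpace ℝ (Fin n), μ {x} = 0 := by
    intro x
    haveI : Nonempty (Fin n) := ⟨⟨0, by omega⟩⟩
    haveI : Nontrivial (EuclideanSpace ℝ (Fin n)) := inferInstance
    rw [hμ, withDensity_apply _ (measurableSet_singleton x)]
    exact setLIntegral_measure_zero _ _ (measure_singleton x)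
  have hsmall : ∀ (x : EuclideanSpace ℝ (Fin n)) (c : ℝ), 0 < c →
      ∃ t : ℝ, 0 < t ∧ G x t < c := by
    intro x c hc
    have hinter : ⋂ k : ℕ, ball x (1/((k:ℝ)+1)) = {x} := by
      apply Set.eq_singleton_iff_unique_mem.2
      refine ⟨Set.mem_iInter.2 fun k => mem_ball_self (by positivity), ?_⟩
      intro y hy
      rw [Set.mem_iInter] at hy
      have hle : dist y x ≤ 0 := by
        by_contra h
        push_neg at h
        obtain ⟨k, hk⟩ := exists_nat_one_div_lt h
        exact absurd (hy k) (not_lt.2 hk.le)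
      exact dist_le_zero.1 hle
    have htend : Tendsto (fun k : ℕ => μ (ball x (1/((k:ℝ)+1)))) atTop (𝓝 0) := by
      have := tendsto_measure_iInter_atTop (μ := μ)
        (s := fun k : ℕ => ball x (1/((k:ℝ)+1)))
        (fun k => measurableSet_ball.nullMeasurableSet)
        (fun a b hab => ball_subset_ball (one_div_le_one_div_of_le (by positivity)
          (by have := (Nat.cast_le (α := ℝ)).2 hab; linarith)))
        ⟨0, (hfin x _ (by norm_num)).ne⟩
      rw [hinter, hsing] at this
      exact this
    obtain ⟨k, hk⟩ :=
      (htend.eventually_lt_const (show (0:ℝ≥0∞) < ENNReal.ofReal c from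
        ENNReal.ofReal_pos.2 hc)).exists
    refine ⟨1/((k:ℝ)+1), by positivity, ?_⟩
    exact ENNReal.toReal_lt_of_lt_ofReal hk
  obtain ⟨k₀, hk₀⟩ := pow_unbounded_of_one_lt (C^2) (show (1:ℝ) < 1+ε by linarith)
  refine ⟨4^(k₀+1), one_le_pow₀ (by norm_num), ?_⟩
  intro x r hr
  have hrn : 0 < r^n := pow_pos hr n
  set S : Set ℝ := {t : ℝ | 0 < t ∧ C * G x t < r^n} with hSdef
  -- S is nonempty
  obtain ⟨t0, ht0, hGt0⟩ := hsmall x (r^n/C) (by positivity)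
  have ht0S : t0 ∈ S := ⟨ht0, by rw [mul_comm]; exact (lt_div_iff₀ hC0).1 hGt0⟩
  -- S is bounded above
  obtain ⟨k₁, hk₁⟩ := pow_unbounded_of_one_lt (r^n/(C * G x 1))
    (show (1:ℝ) < 1+ε by linarith)
  have hT : r^n ≤ C * G x ((4:ℝ)^k₁ * 1) := by
    have hG1 : 0 < G x 1 := Gpos x 1 one_pos
    have h1 : r^n < (1+ε)^k₁ * (C * G x 1) := by
      rw [← div_lt_iff₀ (by positivity : (0:ℝ) < C * G x 1)]
      exact hk₁
    have h2 : C * ((1+ε)^k₁ * G x 1) ≤ C * G x ((4:ℝ)^k₁*1) :=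
      mul_le_mul_of_nonneg_left (Ggrow x 1 one_pos k₁) hC0.le
    nlinarith
  have hbdd : BddAbove S := by
    refine ⟨(4:ℝ)^k₁ * 1, fun t ht => ?_⟩
    by_contra h
    push_neg at h
    have : G x ((4:ℝ)^k₁ * 1) ≤ G x t := Gmono x _ t ht.1 h.le
    nlinarith [ht.2]
  set lam0 : ℝ := sSup S with hlam0def
  have hlam0 : 0 < lam0 := lt_of_lt_of_le ht0 (le_csSup hbdd ht0S)
  obtain ⟨t, htS, htgt⟩ := exists_lt_of_lt_csSup ⟨t0, ht0S⟩ (half_lt_self hlam0)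
  have htpos : 0 < t := htS.1
  have htle : t ≤ lam0 := le_csSup hbdd htS
  refine ⟨t / r, by positivity, ?_, ?_⟩
  · -- ball x (t/r * r) ⊆ d-ball
    have hlr : t / r * r = t := div_mul_cancel₀ _ hr.ne'
    rw [hlr]
    intro y hy
    rcases eq_or_ne x y with rfl | hxy
    · show d x x < r; rw [hd_self]; exact hr
    · show d x y < r
      have hdy : dist x y < t := by rw [dist_comm]; exact (mem_ball.1 hy)
      have h1 : d x y ^ n ≤ C * G x (dist x y) := (hcomp x y).2
      have h2 : G x (dist x y) ≤ G x t := Gmono x _ t htpos hdy.le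
      have h3 : d x y ^ n < r ^ n := by nlinarith [htS.2]
      by_contra h
      push_neg at h
      exact absurd h3 (not_lt.2 (pow_le_pow_left₀ hr.le h n))
  · -- d-ball ⊆ big ball
    intro y hy
    have hy' : d x y < r := hy
    have hrad : (4:ℝ)^(k₀+1) * (t/r) * r = 4^(k₀+1) * t := by
      rw [mul_assoc, div_mul_cancel₀ _ hr.ne']
    rw [mem_ball, hrad]
    rcases eq_or_ne x y with rfl | hxy
    · rw [dist_self]; positivity
    · have hdy : 0 < dist x y := dist_pos.2 hxy
      have h1 : C⁻¹ * G x (dist x y) ≤ d x y ^ n := (hcomp x y).1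
      have h2 : d x y ^ n < r ^ n :=
        pow_lt_pow_left₀ hy' (hd_pos x y hxy).le (by omega)
      have hGlt : G x (dist x y) < C * r^n := by
        rw [inv_mul_le_iff₀ hC0] at h1
        nlinarith
      have hclaim : dist x y ≤ 4^k₀ * lam0 := by
        by_contra h
        push_neg at h
        set s : ℝ := dist x y / 4^k₀ with hsdef
        have hs0 : 0 < s := by positivity
        have hslam : lam0 < s := by
          rw [hsdef, lt_div_iff₀ (by positivity : (0:ℝ) < 4^k₀)]
          linarith
        have hsge : r^n ≤ C * G x s := by
          by_contra h'
          push_neg at h'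
          exact absurd (le_csSup hbdd (⟨hs0, h'⟩ : s ∈ S)) (not_le.2 hslam)
        have h4s : (4:ℝ)^k₀ * s = dist x y := by
          rw [hsdef]; field_simp
        have hgrow := Ggrow x s hs0 k₀
        rw [h4s] at hgrow
        have hGs : r^n / C ≤ G x s := by
          rw [div_le_iff₀ hC0]; linarith [hsge]
        have hfinal : C * r^n ≤ G x (dist x y) := by
          have e1 : C * r^n ≤ C^2 * (r^n / C) := by
            rw [div_eq_mul_inv]
            have : C^2 * (r^n * C⁻¹) = C * r^n := by field_simp
            linarith [this.ge]
          have e2 : C^2 * (r^n / C) ≤ (1+ε)^k₀ * (r^n/C) := by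
            apply mul_le_mul_of_nonneg_right hk₀.le; positivity
          have e3 : (1+ε)^k₀ * (r^n/C) ≤ (1+ε)^k₀ * G x s := by
            apply mul_le_mul_of_nonneg_left hGs; positivity
          linarith
        linarith
      have hfin2 : (4:ℝ)^k₀ * lam0 < 4^(k₀+1) * t := by
        have hps : (0:ℝ) < 4^k₀ := by positivity
        have h1' : lam0 < 2*t := by linarith
        have : (4:ℝ)^(k₀+1) = 4 * 4^k₀ := by ring
        nlinarith
      rw [dist_comm]
      linarith
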